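/- arXiv:1307.8305 — 2 statements merged into one kernel-verified Lean document; each statement's English description precedes it below -/
import Mathlib

section
/- There exists σ > 0 (one may take σ = σ₂/(2σ₁²), where σ₁ = max{v_BᵀKv_B : B a working set} and σ₂ = min{v_BᵀKv_B : B a working set with v_BᵀKv_B > 0}) such that for every second-order working set selection W and every α ∈ R \ R*, the Newton step gain satisfies g̃_W(α) ≥ σ·ψ(α)², the inequality being understood in [0, ∞]. -/
open Matrix Filter Topology ENNReal

namespace SMO

noncomputable section

variable {l : ℕ}

/-- The dual SVM objective `f(α) = yᵀα − (1/2) αᵀKα`. -/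
def obj (y : Fin l → ℝ) (K : Matrix (Fin l) (Fin l) ℝ) (α : Fin l → ℝ) : ℝ :=
  y ⬝ᵥ α - (1 / 2) * (α ⬝ᵥ (K *ᵥ α))

/-- The gradient `∇f(α) = y − Kα`. -/
def grad (y : Fin l → ℝ) (K : Matrix (Fin l) (Fin l) ℝ) (α : Fin l → ℝ) : Fin l → ℝ :=
  y - K *ᵥ α

/-- The direction `v_B = e_i − e_j` of a working set `B = (i, j)`. -/
def dir (B : Fin l × Fin l) : Fin l → ℝ :=
  Pi.single B.1 1 - Pi.single B.2 1

/-- Lower bound `L_i = min {0, y_i C}`. -/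
def lb (y : Fin l → ℝ) (C : ℝ) (i : Fin l) : ℝ := min 0 (y i * C)

/-- Upper bound `U_i = max {0, y_i C}`. -/
def ub (y : Fin l → ℝ) (C : ℝ) (i : Fin l) : ℝ := max 0 (y i * C)

/-- The feasible region `R`. -/
def feas (y : Fin l → ℝ) (C : ℝ) : Set (Fin l → ℝ) :=
  {α | (∑ i, α i) = 0 ∧ ∀ i, lb y C i ≤ α i ∧ α i ≤ ub y C i}

/-- `I_up(α) = {i : α_i < U_i}`. -/
def Iup (y : Fin l → ℝ) (C : ℝ) (α : Fin l → ℝ) : Set (Fin l) := {i | α i < ub y C i}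

/-- `I_down(α) = {i : α_i > L_i}`. -/
def Idown (y : Fin l → ℝ) (C : ℝ) (α : Fin l → ℝ) : Set (Fin l) := {i | lb y C i < α i}

/-- The set `B(α)` of working sets feasible at `α`. -/
def wsets (y : Fin l → ℝ) (C : ℝ) (α : Fin l → ℝ) : Set (Fin l × Fin l) :=
  {B | B.1 ∈ Iup y C α ∧ B.2 ∈ Idown y C α ∧ B.1 ≠ B.2}

/-- The optimal value `f* = max {f(α) : α ∈ R}`. -/
def fstar (y : Fin l → ℝ) (K : Matrix (Fin l) (Fin l) ℝ) (C : ℝ) : ℝ :=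
  sSup (obj y K '' feas y C)

/-- The optimal set `R* = {α ∈ R : f(α) = f*}`. -/
def opt (y : Fin l → ℝ) (K : Matrix (Fin l) (Fin l) ℝ) (C : ℝ) : Set (Fin l → ℝ) :=
  {α ∈ feas y C | obj y K α = fstar y K C}

/-- The gap function `ψ(α) = max {v_Bᵀ ∇f(α) : B ∈ B(α)}`. -/
def psi (y : Fin l → ℝ) (K : Matrix (Fin l) (Fin l) ℝ) (C : ℝ) (α : Fin l → ℝ) : ℝ :=
  sSup ((fun B => dir B ⬝ᵥ grad y K α) '' wsets y C α)

/-- The Newton-step gain `g̃_B(α) = (v_Bᵀ∇f(α))² / (2 v_BᵀKv_B) ∈ [0, ∞]`, with the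
conventions `g̃_B(α) = 0` if `v_BᵀKv_B = 0` and `v_Bᵀ∇f(α) = 0`, and `g̃_B(α) = ∞` if
`v_BᵀKv_B = 0` and `v_Bᵀ∇f(α) ≠ 0`. -/
def ngain (y : Fin l → ℝ) (K : Matrix (Fin l) (Fin l) ℝ) (B : Fin l × Fin l)
    (α : Fin l → ℝ) : ℝ≥0∞ :=
  if dir B ⬝ᵥ (K *ᵥ dir B) = 0 then
    (if dir B ⬝ᵥ grad y K α = 0 then 0 else ⊤)
  else ENNReal.ofReal ((dir B ⬝ᵥ grad y K α) ^ 2 / (2 * (dir B ⬝ᵥ (K *ᵥ dir B))))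

/-- A second-order working set selection: on every non-optimal feasible `α` it returns a
working set `W(α) = (i, j) ∈ B(α)` such that `i` maximizes `(∇f(α))_n` over `n ∈ I_up(α)`
and `j` maximizes `g̃_{(i,n)}(α)` over `n ∈ I_down(α) \ {i}`. -/
def IsSecondOrderWSS (y : Fin l → ℝ) (K : Matrix (Fin l) (Fin l) ℝ) (C : ℝ)
    (W : (Fin l → ℝ) → Fin l × Fin l) : Prop :=
  ∀ α ∈ feas y C \ opt y K C,
    W α ∈ wsets y C α ∧
    (∀ n ∈ Iup y C α, grad y K α n ≤ grad y K α (W α).1) ∧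
    (∀ n ∈ Idown y C α, n ≠ (W α).1 → ngain y K ((W α).1, n) α ≤ ngain y K (W α) α)

lemma dir_dot {l : ℕ} (B : Fin l × Fin l) (v : Fin l → ℝ) :
    dir B ⬝ᵥ v = v B.1 - v B.2 := by
  simp [dir, sub_dotProduct, single_dotProduct]

/-- There exists `σ > 0` such that for every second-order working set
selection `W` and every `α ∈ R \ R*`, the Newton step gain satisfies
`g̃_W(α) ≥ σ·ψ(α)²` (inequality in `[0, ∞]`). -/
theorem newton_gain_lower_bound
    (hl : 2 ≤ l) (y : Fin l → ℝ) (hy : ∀ i, y i = 1 ∨ y i = -1)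
    (K : Matrix (Fin l) (Fin l) ℝ) (hK : K.PosSemidef) (C : ℝ) (hC : 0 < C) :
    ∃ σ : ℝ, 0 < σ ∧
      ∀ W : (Fin l → ℝ) → Fin l × Fin l, IsSecondOrderWSS y K C W →
        ∀ α ∈ feas y C \ opt y K C,
          ENNReal.ofReal (σ * (psi y K C α) ^ 2) ≤ ngain y K (W α) α := by
  haveI : Nonempty (Fin l) := ⟨⟨0, by omega⟩⟩
  have hne : (Finset.univ : Finset (Fin l × Fin l)).Nonempty := Finset.univ_nonempty
  set m : ℝ := max 1 (Finset.univ.sup' hne fun B => dir B ⬝ᵥ (K *ᵥ dir B)) with hm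
  have hm1 : (1:ℝ) ≤ m := le_max_left _ _
  have hmpos : (0:ℝ) < m := lt_of_lt_of_le one_pos hm1
  have hdm : ∀ B : Fin l × Fin l, dir B ⬝ᵥ (K *ᵥ dir B) ≤ m := fun B =>
    le_trans (Finset.le_sup' (fun B => dir B ⬝ᵥ (K *ᵥ dir B)) (Finset.mem_univ B)) (le_max_right _ _)
  refine ⟨1 / (2 * m), by positivity, ?_⟩
  intro W hW α hα
  obtain ⟨hWmem, hImax, hJmax⟩ := hW α hα
  set ψ := psi y K C α with hψdef
  have hSfin : ((fun B => dir B ⬝ᵥ grad y K α) '' wsets y C α).Finite :=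
    (Set.toFinite _).image _
  have hSne : ((fun B => dir B ⬝ᵥ grad y K α) '' wsets y C α).Nonempty :=
    ⟨_, Set.mem_image_of_mem _ hWmem⟩
  have hub : ∀ B ∈ wsets y C α, dir B ⬝ᵥ grad y K α ≤ ψ := fun B hB =>
    le_csSup hSfin.bddAbove (Set.mem_image_of_mem _ hB)
  have hmem := hSne.csSup_mem hSfin
  obtain ⟨Bs, hBs, hBsval⟩ := hmem
  have key : ∀ B : Fin l × Fin l, ψ ^ 2 ≤ (dir B ⬝ᵥ grad y K α) ^ 2 →
      ngain y K B α ≤ ngain y K (W α) α →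
      ENNReal.ofReal (1 / (2 * m) * ψ ^ 2) ≤ ngain y K (W α) α := by
    intro B ht hle
    refine le_trans ?_ hle
    unfold ngain
    by_cases hd : dir B ⬝ᵥ (K *ᵥ dir B) = 0
    · by_cases hg : dir B ⬝ᵥ grad y K α = 0
      · rw [if_pos hd, if_pos hg]
        have h0 : ψ ^ 2 ≤ 0 := by rw [hg] at ht; simpa using ht
        have hψ0 : ψ ^ 2 = 0 := le_antisymm h0 (sq_nonneg _)
        simp [hψ0]
      · rw [if_pos hd, if_neg hg]
        exact le_top
    · rw [if_neg hd]
      have hd0 : 0 < dir B ⬝ᵥ (K *ᵥ dir B) := lt_of_le_of_ne (by simpa using hK.dotProduct_mulVec_nonneg (dir B)) (Ne.symm hd)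
      apply ENNReal.ofReal_le_ofReal
      have h1 : 1 / (2 * m) * ψ ^ 2 = ψ ^ 2 / (2 * m) := by ring
      rw [h1]
      calc ψ ^ 2 / (2 * m) ≤ ψ ^ 2 / (2 * (dir B ⬝ᵥ (K *ᵥ dir B))) := by
            apply div_le_div_of_nonneg_left (sq_nonneg _) (by linarith)
            linarith [hdm B]
        _ ≤ (dir B ⬝ᵥ grad y K α) ^ 2 / (2 * (dir B ⬝ᵥ (K *ᵥ dir B))) := by
            apply div_le_div_of_nonneg_right ht (by linarith)
  rcases le_or_gt ψ 0 with hψ | hψ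
  · apply key (W α) _ le_rfl
    have h1 : dir (W α) ⬝ᵥ grad y K α ≤ ψ := hub _ hWmem
    nlinarith
  · obtain ⟨hp, hq, hpq⟩ := hBs
    have hval : grad y K α Bs.1 - grad y K α Bs.2 = ψ := by
      rw [← dir_dot]; exact hBsval
    have hple : grad y K α Bs.1 ≤ grad y K α (W α).1 := hImax _ hp
    by_cases hqi : Bs.2 = (W α).1
    · exfalso
      rw [hqi] at hval
      obtain ⟨hiup, _, _⟩ := hWmem
      linarith [hImax _ hp, hval, hψ, hImax Bs.1 hp]
    · apply key ((W α).1, Bs.2)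
      · have h2 : dir ((W α).1, Bs.2) ⬝ᵥ grad y K α
            = grad y K α (W α).1 - grad y K α Bs.2 := dir_dot _ _
        rw [h2]
        nlinarith
      · exact hJmax _ hq hqi

end

end SMO
end

section
/- Let α ∈ ℝ^ℓ and let B₁, B₂ be working sets with Q₂₂ := v_{B₂}ᵀKv_{B₂} > 0. Set w₁ = v_{B₁}ᵀ∇f(α), w₂ = v_{B₂}ᵀ∇f(α), Q₁₁ = v_{B₁}ᵀKv_{B₁}, Q₁₂ = v_{B₁}ᵀKv_{B₂}, and let Q be the 2×2 matrix with rows (Q₁₁, Q₁₂) and (Q₁₂, Q₂₂). Assume det(Q) > 0. Then the function g : ℝ → ℝ, g(μ₁) = f(α + μ₁ v_{B₁} + ((w₂ − Q₁₂ μ₁)/Q₂₂) v_{B₂}) − f(α), attains its maximum at the unique point μ₁ = (Q₂₂ w₁ − Q₁₂ w₂)/det(Q) (the planning-ahead step size). -/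
open Matrix Filter Topology ENNReal

namespace SMO

noncomputable section

variable {l : ℕ}

lemma obj_expand {l : ℕ} (y : Fin l → ℝ) (K : Matrix (Fin l) (Fin l) ℝ) (hK : K.PosSemidef)
    (α v₁ v₂ : Fin l → ℝ) (c₁ c₂ : ℝ) :
    obj y K (α + c₁ • v₁ + c₂ • v₂) - obj y K α =
      c₁ * (v₁ ⬝ᵥ grad y K α) + c₂ * (v₂ ⬝ᵥ grad y K α) -
        (1/2) * (c₁^2 * (v₁ ⬝ᵥ (K *ᵥ v₁)) + 2*c₁*c₂ * (v₁ ⬝ᵥ (K *ᵥ v₂)) +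
          c₂^2 * (v₂ ⬝ᵥ (K *ᵥ v₂))) := by
  have hsym : ∀ u v : Fin l → ℝ, u ⬝ᵥ (K *ᵥ v) = v ⬝ᵥ (K *ᵥ u) := by
    intro u v
    have ht : Kᵀ = K := hK.1
    rw [Matrix.dotProduct_mulVec, ← Matrix.mulVec_transpose, ht, dotProduct_comm]
  simp only [obj, grad, mulVec_add, mulVec_smul, dotProduct_add, add_dotProduct,
    dotProduct_smul, smul_dotProduct, smul_eq_mul, dotProduct_sub, sub_dotProduct]
  rw [hsym α v₁, hsym α v₂, hsym v₂ v₁, dotProduct_comm y v₁, dotProduct_comm y v₂]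
  ring

/-- With `Q₂₂ > 0` and `det(Q) > 0`, the two-step gain function
`g(μ₁) = f(α + μ₁v_{B₁} + ((w₂ − Q₁₂μ₁)/Q₂₂)v_{B₂}) − f(α)` attains its maximum at the
unique point `μ₁ = (Q₂₂w₁ − Q₁₂w₂)/det(Q)` (the planning-ahead step size). -/
theorem planning_ahead_step_optimal
    (hl : 2 ≤ l) (y : Fin l → ℝ) (hy : ∀ i, y i = 1 ∨ y i = -1)
    (K : Matrix (Fin l) (Fin l) ℝ) (hK : K.PosSemidef)
    (α : Fin l → ℝ) (B₁ B₂ : Fin l × Fin l) (hB₁ : B₁.1 ≠ B₁.2) (hB₂ : B₂.1 ≠ B₂.2)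
    (w₁ w₂ Q₁₁ Q₁₂ Q₂₂ : ℝ)
    (hw₁ : w₁ = dir B₁ ⬝ᵥ grad y K α)
    (hw₂ : w₂ = dir B₂ ⬝ᵥ grad y K α)
    (hQ₁₁ : Q₁₁ = dir B₁ ⬝ᵥ (K *ᵥ dir B₁))
    (hQ₁₂ : Q₁₂ = dir B₁ ⬝ᵥ (K *ᵥ dir B₂))
    (hQ₂₂ : Q₂₂ = dir B₂ ⬝ᵥ (K *ᵥ dir B₂)) (hQ₂₂pos : 0 < Q₂₂)
    (hdet : 0 < (!![Q₁₁, Q₁₂; Q₁₂, Q₂₂] : Matrix (Fin 2) (Fin 2) ℝ).det)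
    (g : ℝ → ℝ)
    (hg : g = fun μ₁ =>
      obj y K (α + μ₁ • dir B₁ + ((w₂ - Q₁₂ * μ₁) / Q₂₂) • dir B₂) - obj y K α)
    (μpa : ℝ)
    (hμpa : μpa = (Q₂₂ * w₁ - Q₁₂ * w₂) / (!![Q₁₁, Q₁₂; Q₁₂, Q₂₂] : Matrix (Fin 2) (Fin 2) ℝ).det) :
    (∀ μ₁ : ℝ, g μ₁ ≤ g μpa) ∧ (∀ μ₁ : ℝ, (∀ ν : ℝ, g ν ≤ g μ₁) → μ₁ = μpa) := by
  have hD : (!![Q₁₁, Q₁₂; Q₁₂, Q₂₂] : Matrix (Fin 2) (Fin 2) ℝ).det = Q₁₁*Q₂₂ - Q₁₂*Q₁₂ := by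
    simp [Matrix.det_fin_two_of]
  rw [hD] at hdet hμpa
  have hQ₂₂ne : Q₂₂ ≠ 0 := ne_of_gt hQ₂₂pos
  have hDne : Q₁₁*Q₂₂ - Q₁₂*Q₁₂ ≠ 0 := ne_of_gt hdet
  have hgval : ∀ μ₁ : ℝ, g μ₁ = μ₁*w₁ + ((w₂-Q₁₂*μ₁)/Q₂₂)*w₂ -
      (1/2)*(μ₁^2*Q₁₁ + 2*μ₁*((w₂-Q₁₂*μ₁)/Q₂₂)*Q₁₂ + ((w₂-Q₁₂*μ₁)/Q₂₂)^2*Q₂₂) := by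
    intro μ₁
    rw [hg]
    simp only
    rw [obj_expand y K hK α (dir B₁) (dir B₂) μ₁ ((w₂-Q₁₂*μ₁)/Q₂₂),
      ← hw₁, ← hw₂, ← hQ₁₁, ← hQ₁₂, ← hQ₂₂]
  have hkey : ∀ μ₁ : ℝ,
      g μ₁ = g μpa - ((Q₁₁*Q₂₂ - Q₁₂*Q₁₂)/(2*Q₂₂)) * (μ₁ - μpa)^2 := by
    intro μ₁
    rw [hgval μ₁, hgval μpa, hμpa]
    have hDne' : Q₂₂ * Q₁₁ - Q₁₂ ^ 2 ≠ 0 := by intro h; apply hDne; linarith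
    field_simp
    ring
  have hcpos : 0 < (Q₁₁*Q₂₂ - Q₁₂*Q₁₂)/(2*Q₂₂) := div_pos hdet (by linarith)
  constructor
  · intro μ₁
    rw [hkey μ₁]
    nlinarith [sq_nonneg (μ₁ - μpa), mul_nonneg hcpos.le (sq_nonneg (μ₁ - μpa))]
  · intro μ₁ h
    have h1 := h μpa
    rw [hkey μ₁] at h1
    have h2 : (μ₁ - μpa)^2 = 0 := by nlinarith [sq_nonneg (μ₁ - μpa)]
    have := pow_eq_zero_iff (n := 2) (by norm_num) |>.mp h2
    linarith [sub_eq_zero.mp this]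


end

end SMO
end
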